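/- arXiv:1410.0398 — 3 statements merged into one kernel-verified Lean document; each statement's English description precedes it below -/
import Mathlib

section
/- Let Λ ⊆ Z^d be a finite connected set with |Λ| ≥ 2 and λ_1, …, λ_d > 0. Suppose a : {X ⊆ Λ : |X| = N} → C with N ≥ 2 satisfies: (i) a(X) = 0 whenever X contains a nearest-neighbor pair, and (ii) for every X with |X| = N, every x ∈ X and every nearest neighbor x' = x ± e_k of x with x' ∈ Λ \ X, a((X \ {x}) ∪ {x'}) = λ_k^{±1} a(X). Then a(X) = 0 for all X. -/
noncomputable section

abbrev Site (d : ℕ) := Fin d → ℤ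

def unitVec (d : ℕ) (k : Fin d) : Site d := fun j => if j = k then 1 else 0

def Adj {d : ℕ} (x y : Site d) : Prop := ∃ k, y = x + unitVec d k ∨ x = y + unitVec d k

/-- `Λ` is connected in the nearest-neighbor graph of `ℤ^d`. -/
def ConnectedIn {d : ℕ} (Λ : Finset (Site d)) : Prop :=
  ∀ x ∈ Λ, ∀ y ∈ Λ, Relation.ReflTransGen (fun u v => v ∈ Λ ∧ Adj u v) x y

/-- no `N`-particle ground states for `N ≥ 2`.  If the coefficients
`a(X)` (for `X ⊆ Λ`, `|X| = N`) vanish on configurations containing a nearest-neighbor pair,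
and satisfy the hopping relations `a((X∖{x})∪{x±e_k}) = λ_k^{±1} a(X)`, then `a ≡ 0`. -/
theorem no_multiparticle_ground_states {d : ℕ} (Λ : Finset (Site d))
    (hconn : ConnectedIn Λ) (hcard : 2 ≤ Λ.card)
    (lam : Fin d → ℝ) (hlam : ∀ k, 0 < lam k)
    (N : ℕ) (hN : 2 ≤ N) (a : Finset (Site d) → ℂ)
    (hnn : ∀ X ⊆ Λ, X.card = N → (∃ x ∈ X, ∃ k : Fin d, x + unitVec d k ∈ X) → a X = 0)
    (hhop : ∀ X ⊆ Λ, X.card = N → ∀ x ∈ X, ∀ k : Fin d, ∀ p : ℤ, (p = 1 ∨ p = -1) →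
      x + p • unitVec d k ∈ Λ → x + p • unitVec d k ∉ X →
      a (insert (x + p • unitVec d k) (X.erase x)) = (lam k : ℂ) ^ p * a X) :
    ∀ X ⊆ Λ, X.card = N → a X = 0 := by
  have key : ∀ y x : Site d, Relation.ReflTransGen (fun u v => v ∈ Λ ∧ Adj u v) x y →
      ∀ X, X ⊆ Λ → X.card = N → x ∈ X → y ∈ X → x ≠ y → a X = 0 := by
    intro y x hpath
    induction hpath using Relation.ReflTransGen.head_induction_on with
    | refl => intro X _ _ _ _ hne; exact absurd rfl hne
    | @head x u h htail ih =>
      intro X hXΛ hXcard hxX hyX hxy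
      obtain ⟨huΛ, k, hcase⟩ := h
      by_cases huX : u ∈ X
      · apply hnn X hXΛ hXcard
        rcases hcase with h1 | h2
        · exact ⟨x, hxX, k, h1 ▸ huX⟩
        · exact ⟨u, huX, k, h2 ▸ hxX⟩
      · obtain ⟨p, hp, hu⟩ : ∃ p : ℤ, (p = 1 ∨ p = -1) ∧ u = x + p • unitVec d k := by
          rcases hcase with h1 | h2
          · exact ⟨1, Or.inl rfl, by simpa using h1⟩
          · exact ⟨-1, Or.inr rfl, by rw [h2]; module⟩
        have hyp := hhop X hXΛ hXcard x hxX k p hp (hu ▸ huΛ) (hu ▸ huX)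
        rw [← hu] at hyp
        have huy : u ≠ y := fun heq => huX (heq ▸ hyX)
        have h0 : a (insert u (X.erase x)) = 0 := by
          apply ih (insert u (X.erase x))
          · exact Finset.insert_subset huΛ ((Finset.erase_subset _ _).trans hXΛ)
          · rw [Finset.card_insert_of_notMem (fun hm => huX (Finset.mem_of_mem_erase hm)),
              Finset.card_erase_of_mem hxX, hXcard]
            omega
          · exact Finset.mem_insert_self _ _
          · exact Finset.mem_insert_of_mem (Finset.mem_erase.mpr ⟨Ne.symm hxy, hyX⟩)
          · exact huy
        have hne : (lam k : ℂ) ^ p ≠ 0 := by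
          apply zpow_ne_zero
          exact_mod_cast (hlam k).ne'
        rw [h0] at hyp
        exact ((mul_eq_zero.mp hyp.symm).resolve_left hne)
  intro X hXΛ hXcard
  obtain ⟨x, hxX, y, hyX, hxy⟩ := Finset.one_lt_card.mp (by omega : 1 < X.card)
  exact key y x (hconn x (hXΛ hxX) y (hXΛ hyX)) X hXΛ hXcard hxX hyX hxy

end
end

section
/- For the one-species PVBS model on a finite connected Λ ⊆ Z^d with parameters λ_1,…,λ_d > 0, the kernel of the Hamiltonian H_Λ = Σ_k Σ_{x, x+e_k ∈ Λ} h^{(k)}_{x,x+e_k} is exactly two-dimensional, spanned by the all-zero product vector ψ_0 = ⊗_{x∈Λ}|0⟩ and the one-particle vector ψ_1 = C(Λ)^{-1/2} Σ_{x∈Λ} λ^x ξ_{{x}}, where C(Λ) = Σ_{x∈Λ} λ^{2x}. -/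
open scoped BigOperators

noncomputable section

abbrev Cfg {d : ℕ} (Λ : Finset (Site d)) := (↑Λ : Type) → Bool

abbrev HSp {d : ℕ} (Λ : Finset (Site d)) := EuclideanSpace ℂ (Cfg Λ)

/-- One-particle basis vector with the particle at site `x`. -/
def ksi {d : ℕ} {Λ : Finset (Site d)} (x : ↑Λ) : HSp Λ :=
  WithLp.toLp 2 (fun σ => if σ = (fun (y : ↑Λ) => decide ((y : Site d) = (x : Site d))) then 1 else 0)

/-- The all-zero (vacuum) product vector. -/
def vac {d : ℕ} (Λ : Finset (Site d)) : HSp Λ :=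
  WithLp.toLp 2 (fun σ => if σ = (fun _ => false) then 1 else 0)

/-- The PVBS nearest-neighbor interaction `|11><11| + |φ̂><φ̂|` acting on the bond `(x, y)`. -/
def hop {d : ℕ} {Λ : Finset (Site d)} (lam : ℝ) (x y : ↑Λ) (ψ : HSp Λ) : HSp Λ :=
  WithLp.toLp 2 (fun σ =>
    (if σ x = true ∧ σ y = true then ψ σ else 0) +
    (if σ x = false ∧ σ y = true then
        (ψ (Function.update (Function.update σ x false) y true)
          - (lam : ℂ) * ψ (Function.update (Function.update σ x true) y false)) / (1 + (lam : ℂ)^2)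
     else if σ x = true ∧ σ y = false then
        -(lam : ℂ) * ((ψ (Function.update (Function.update σ x false) y true)
          - (lam : ℂ) * ψ (Function.update (Function.update σ x true) y false)) / (1 + (lam : ℂ)^2))
     else 0))

/-- The PVBS Hamiltonian on `Λ`: sum of the bond interactions over all nearest-neighbor
bonds `(x, x + e_k)` contained in `Λ`. -/
def Ham {d : ℕ} (Λ : Finset (Site d)) (lam : Fin d → ℝ) (ψ : HSp Λ) : HSp Λ :=
  WithLp.toLp 2 (fun σ => ∑ k : Fin d, ∑ x : ↑Λ,
    (if h : ((x : Site d) + unitVec d k) ∈ Λ then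
        hop (lam k) x ⟨(x : Site d) + unitVec d k, h⟩ ψ σ else 0))

/-- `λ^x = ∏_k λ_k^{x_k}`. -/
def lamPow {d : ℕ} (lam : Fin d → ℝ) (x : Site d) : ℝ := ∏ k, (lam k) ^ (x k)

/-- `C(Λ) = ∑_{x∈Λ} λ^{2x}`. -/
def CC {d : ℕ} (lam : Fin d → ℝ) (Λ : Finset (Site d)) : ℝ := ∑ x ∈ Λ, (lamPow lam x)^2

/-- The normalized one-particle ground state vector. -/
def psi1 {d : ℕ} (Λ : Finset (Site d)) (lam : Fin d → ℝ) : HSp Λ :=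
  WithLp.toLp 2 (fun σ => (Real.sqrt (CC lam Λ) : ℂ)⁻¹ * ∑ x : ↑Λ, ((lamPow lam x : ℝ) : ℂ) * ksi x σ)

-- ====== auxiliary development ======
namespace PVBSaux

variable {d : ℕ} {Λ : Finset (Site d)}

/-- delta configuration -/
def dlt (x : ↑Λ) : Cfg Λ := fun y => decide ((y : Site d) = (x : Site d))

lemma dlt_self (x : ↑Λ) : dlt x x = true := by simp [dlt]

lemma dlt_ne (x z : ↑Λ) (h : z ≠ x) : dlt x z = false := by
  simp [dlt]; exact fun hc => h hc

def swapxy (x y : ↑Λ) (σ : Cfg Λ) : Cfg Λ :=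
  Function.update (Function.update σ x (σ y)) y (σ x)

lemma swap_apply_y (x y : ↑Λ) (σ : Cfg Λ) : swapxy x y σ y = σ x := by
  simp [swapxy]

lemma swap_apply_x (x y : ↑Λ) (σ : Cfg Λ) (h : x ≠ y) : swapxy x y σ x = σ y := by
  simp [swapxy, Function.update_apply, h]

lemma swap_apply_other (x y z : ↑Λ) (σ : Cfg Λ) (hx : z ≠ x) (hy : z ≠ y) :
    swapxy x y σ z = σ z := by
  simp [swapxy, Function.update_apply, hx, hy]

lemma swap_invol (x y : ↑Λ) (h : x ≠ y) (σ : Cfg Λ) : swapxy x y (swapxy x y σ) = σ := by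
  funext z
  by_cases hz : z = y
  · subst hz; rw [swap_apply_y, swap_apply_x _ _ _ h]
  · by_cases hz' : z = x
    · subst hz'; rw [swap_apply_x _ _ _ h, swap_apply_y]
    · rw [swap_apply_other _ _ _ _ hz' hz, swap_apply_other _ _ _ _ hz' hz]

lemma upd2_self (x y : ↑Λ) (σ : Cfg Λ) (h : x ≠ y) {a b : Bool} (ha : σ x = a) (hb : σ y = b) :
    Function.update (Function.update σ x a) y b = σ := by
  funext z
  by_cases hz : z = y
  · subst hz; simp [hb]
  · by_cases hz' : z = x
    · subst hz'; simp [Function.update_apply, hz, ha]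
    · simp [Function.update_apply, hz, hz']

lemma upd2_swap (x y : ↑Λ) (σ : Cfg Λ) (h : x ≠ y) {a b : Bool} (ha : σ x = a) (hb : σ y = b) :
    Function.update (Function.update σ x b) y a = swapxy x y σ := by
  funext z
  by_cases hz : z = y
  · subst hz; simp [swap_apply_y, ha]
  · by_cases hz' : z = x
    · subst hz'
      simp [Function.update_apply, hz, swap_apply_x _ _ _ h, hb]
    · simp [Function.update_apply, hz, hz', swap_apply_other _ _ _ _ hz' hz]

/-- structured form of `hop`. -/
lemma hop_eq (lam : ℝ) (x y : ↑Λ) (h : x ≠ y) (ψ : HSp Λ) (σ : Cfg Λ) :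
    hop lam x y ψ σ =
      (if σ x = true ∧ σ y = true then ψ σ else 0) +
      (if σ x = false ∧ σ y = true then
          (ψ σ - (lam : ℂ) * ψ (swapxy x y σ)) / (1 + (lam : ℂ)^2)
       else if σ x = true ∧ σ y = false then
          -(lam : ℂ) * ((ψ (swapxy x y σ) - (lam : ℂ) * ψ σ) / (1 + (lam : ℂ)^2))
       else 0) := by
  unfold hop
  rcases hx : σ x <;> rcases hy : σ y <;> simp [hx, hy]
  · rw [upd2_self x y σ h hx hy, upd2_swap x y σ h hx hy]
  · rw [upd2_swap x y σ h hx hy, upd2_self x y σ h hx hy]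
    exact Or.inl rfl


/-- bond energy of a bond, as a real number -/
def bondE (lam : ℝ) (x y : ↑Λ) (ψ : HSp Λ) : ℝ :=
  (∑ σ : Cfg Λ, (if σ x = true ∧ σ y = true then Complex.normSq (ψ σ) else 0))
  + ∑ σ : Cfg Λ, (if σ x = false ∧ σ y = true then
      Complex.normSq (ψ σ - (lam:ℂ) * ψ (swapxy x y σ)) / (1 + lam^2) else 0)

lemma bondE_nonneg (lam : ℝ) (x y : ↑Λ) (ψ : HSp Λ) : 0 ≤ bondE lam x y ψ := by
  have h1 : (0:ℝ) < 1 + lam^2 := by positivity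
  refine add_nonneg (Finset.sum_nonneg fun σ _ => ?_) (Finset.sum_nonneg fun σ _ => ?_) <;>
    split_ifs
  · exact Complex.normSq_nonneg _
  · exact le_refl 0
  · exact div_nonneg (Complex.normSq_nonneg _) (le_of_lt h1)
  · exact le_refl 0

lemma bond_energy (lam : ℝ) (x y : ↑Λ) (h : x ≠ y) (ψ : HSp Λ) :
    ∑ σ : Cfg Λ, (starRingEnd ℂ) (ψ σ) * hop lam x y ψ σ = ((bondE lam x y ψ : ℝ) : ℂ) := by
  have hinv : Function.Involutive (swapxy x y) := swap_invol x y h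
  have e : Cfg Λ ≃ Cfg Λ := Function.Involutive.toPerm _ hinv
  have key : ∀ σ : Cfg Λ, (starRingEnd ℂ) (ψ σ) * hop lam x y ψ σ
      = (if σ x = true ∧ σ y = true then ((Complex.normSq (ψ σ) : ℝ) : ℂ) else 0)
      + ((if σ x = false ∧ σ y = true then
            (starRingEnd ℂ) (ψ σ) * ((ψ σ - (lam : ℂ) * ψ (swapxy x y σ)) / (1 + (lam : ℂ)^2)) else 0)
        + (if σ x = true ∧ σ y = false then
            (starRingEnd ℂ) (ψ σ) * (-(lam : ℂ) * ((ψ (swapxy x y σ) - (lam : ℂ) * ψ σ) / (1 + (lam : ℂ)^2))) else 0)) := by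
    intro σ
    rw [hop_eq lam x y h ψ σ, mul_add]
    rcases hx : σ x <;> rcases hy : σ y <;>
      simp [hx, hy, ← Complex.normSq_eq_conj_mul_self]
  rw [Finset.sum_congr rfl (fun σ _ => key σ), Finset.sum_add_distrib, Finset.sum_add_distrib]
  -- reindex the (t,f) sum by the swap involution
  have reindex : ∑ σ : Cfg Λ, (if σ x = true ∧ σ y = false then
            (starRingEnd ℂ) (ψ σ) * (-(lam : ℂ) * ((ψ (swapxy x y σ) - (lam : ℂ) * ψ σ) / (1 + (lam : ℂ)^2))) else 0)
      = ∑ σ : Cfg Λ, (if σ x = false ∧ σ y = true then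
            (starRingEnd ℂ) (ψ (swapxy x y σ)) * (-(lam : ℂ) * ((ψ σ - (lam : ℂ) * ψ (swapxy x y σ)) / (1 + (lam : ℂ)^2))) else 0) := by
    refine Fintype.sum_equiv (Function.Involutive.toPerm _ hinv) _ _ (fun σ => ?_)
    simp only [Function.Involutive.coe_toPerm]
    simp only [swap_apply_x x y σ h, swap_apply_y x y σ, hinv σ]
    exact if_congr and_comm rfl rfl
  rw [reindex, ← Finset.sum_add_distrib]
  have combine : ∀ σ : Cfg Λ,
      ((if σ x = false ∧ σ y = true then
            (starRingEnd ℂ) (ψ σ) * ((ψ σ - (lam : ℂ) * ψ (swapxy x y σ)) / (1 + (lam : ℂ)^2)) else 0)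
        + (if σ x = false ∧ σ y = true then
            (starRingEnd ℂ) (ψ (swapxy x y σ)) * (-(lam : ℂ) * ((ψ σ - (lam : ℂ) * ψ (swapxy x y σ)) / (1 + (lam : ℂ)^2))) else 0))
      = (if σ x = false ∧ σ y = true then
          ((Complex.normSq (ψ σ - (lam:ℂ) * ψ (swapxy x y σ)) / (1 + lam^2) : ℝ) : ℂ) else 0) := by
    intro σ
    split_ifs with hc
    · have hw : ((Complex.normSq (ψ σ - (lam:ℂ) * ψ (swapxy x y σ)) : ℝ) : ℂ)
          = (starRingEnd ℂ) (ψ σ - (lam:ℂ) * ψ (swapxy x y σ)) * (ψ σ - (lam:ℂ) * ψ (swapxy x y σ)) :=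
        Complex.normSq_eq_conj_mul_self
      have h2 : ((1 + lam^2 : ℝ) : ℂ) ≠ 0 := by
        have : (0:ℝ) < 1 + lam^2 := by positivity
        exact_mod_cast Complex.ofReal_ne_zero.2 (ne_of_gt this)
      push_cast
      rw [hw]
      simp only [map_sub, map_mul, Complex.conj_ofReal]
      ring
    · simp
  rw [Finset.sum_congr rfl (fun σ _ => combine σ)]
  unfold bondE
  rw [Complex.ofReal_add]
  congr 1
  · rw [Complex.ofReal_sum]
    exact Finset.sum_congr rfl fun σ _ => by rw [apply_ite (fun r : ℝ => (r:ℂ))]; push_cast; ring_nf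
  · rw [Complex.ofReal_sum]
    exact Finset.sum_congr rfl fun σ _ => by rw [apply_ite (fun r : ℝ => (r:ℂ))]; push_cast; ring_nf

lemma bond_ne (x : ↑Λ) (k : Fin d) (hy : ((x : Site d) + unitVec d k) ∈ Λ) :
    x ≠ (⟨(x : Site d) + unitVec d k, hy⟩ : ↑Λ) := by
  intro hc
  have := congrFun (congrArg Subtype.val hc) k
  simp [unitVec] at this

lemma ker_facts (lamv : Fin d → ℝ) (ψ : HSp Λ)
    (hψ : Ham Λ lamv ψ = 0) (k : Fin d) (x : ↑Λ) (hy : ((x : Site d) + unitVec d k) ∈ Λ) :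
    bondE (lamv k) x ⟨(x : Site d) + unitVec d k, hy⟩ ψ = 0 := by
  have h0 : ∀ σ : Cfg Λ, Ham Λ lamv ψ σ = 0 := fun σ => by rw [hψ]; rfl
  have total : (0:ℂ) = ∑ k' : Fin d, ∑ x' : ↑Λ,
      (if h' : ((x' : Site d) + unitVec d k') ∈ Λ then
        ((bondE (lamv k') x' ⟨(x' : Site d) + unitVec d k', h'⟩ ψ : ℝ) : ℂ) else 0) := by
    calc (0:ℂ) = ∑ σ : Cfg Λ, (starRingEnd ℂ) (ψ σ) * Ham Λ lamv ψ σ := by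
          simp [h0]
    _ = ∑ σ : Cfg Λ, ∑ k' : Fin d, ∑ x' : ↑Λ,
          (starRingEnd ℂ) (ψ σ) * (if h' : ((x' : Site d) + unitVec d k') ∈ Λ then
            hop (lamv k') x' ⟨(x' : Site d) + unitVec d k', h'⟩ ψ σ else 0) := by
          refine Finset.sum_congr rfl fun σ _ => ?_
          show (starRingEnd ℂ) (ψ σ) * Ham Λ lamv ψ σ = _
          unfold Ham
          rw [Finset.mul_sum]
          exact Finset.sum_congr rfl fun k' _ => Finset.mul_sum _ _ _
    _ = ∑ k' : Fin d, ∑ x' : ↑Λ, ∑ σ : Cfg Λ,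
          (starRingEnd ℂ) (ψ σ) * (if h' : ((x' : Site d) + unitVec d k') ∈ Λ then
            hop (lamv k') x' ⟨(x' : Site d) + unitVec d k', h'⟩ ψ σ else 0) := by
          rw [Finset.sum_comm]
          exact Finset.sum_congr rfl fun k' _ => Finset.sum_comm
    _ = ∑ k' : Fin d, ∑ x' : ↑Λ,
          (if h' : ((x' : Site d) + unitVec d k') ∈ Λ then
            ((bondE (lamv k') x' ⟨(x' : Site d) + unitVec d k', h'⟩ ψ : ℝ) : ℂ) else 0) := by
          refine Finset.sum_congr rfl fun k' _ => Finset.sum_congr rfl fun x' _ => ?_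
          by_cases h' : ((x' : Site d) + unitVec d k') ∈ Λ
          · simp only [h', dif_pos]
            exact bond_energy (lamv k') x' _ (bond_ne x' k' h') ψ
          · simp [h']
  have totre : (0:ℝ) = ∑ k' : Fin d, ∑ x' : ↑Λ,
      (if h' : ((x' : Site d) + unitVec d k') ∈ Λ then
        bondE (lamv k') x' ⟨(x' : Site d) + unitVec d k', h'⟩ ψ else 0) := by
    have := congrArg Complex.re total
    simpa [Complex.re_sum, apply_dite Complex.re] using this
  have hterm : ∀ k' : Fin d, ∀ x' : ↑Λ, (0:ℝ) ≤
      (if h' : ((x' : Site d) + unitVec d k') ∈ Λ then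
        bondE (lamv k') x' ⟨(x' : Site d) + unitVec d k', h'⟩ ψ else 0) := by
    intro k' x'
    by_cases h' : ((x' : Site d) + unitVec d k') ∈ Λ
    · simpa [h'] using bondE_nonneg (lamv k') x' ⟨_, h'⟩ ψ
    · simp [h']
  have hall : ∀ k' ∈ (Finset.univ : Finset (Fin d)), ∀ x' ∈ (Finset.univ : Finset ↑Λ),
      (if h' : ((x' : Site d) + unitVec d k') ∈ Λ then
        bondE (lamv k') x' ⟨(x' : Site d) + unitVec d k', h'⟩ ψ else 0) = 0 := by
    have h1 := (Finset.sum_eq_zero_iff_of_nonneg (fun k' _ =>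
      Finset.sum_nonneg (fun x' _ => hterm k' x'))).1 totre.symm
    intro k' hk' x' hx'
    exact (Finset.sum_eq_zero_iff_of_nonneg (fun x' _ => hterm k' x')).1 (h1 k' hk') x' hx'
  have := hall k (Finset.mem_univ k) x (Finset.mem_univ x)
  simpa [hy] using this

lemma ker_zero_pair (lamv : Fin d → ℝ) (ψ : HSp Λ)
    (hψ : Ham Λ lamv ψ = 0) (k : Fin d) (x : ↑Λ) (hy : ((x : Site d) + unitVec d k) ∈ Λ)
    (σ : Cfg Λ) (h1 : σ x = true) (h2 : σ ⟨(x : Site d) + unitVec d k, hy⟩ = true) :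
    ψ σ = 0 := by
  set y : ↑Λ := ⟨(x : Site d) + unitVec d k, hy⟩
  have hb := ker_facts lamv ψ hψ k x hy
  unfold bondE at hb
  have hs1 : (0:ℝ) ≤ ∑ σ : Cfg Λ, (if σ x = true ∧ σ y = true then Complex.normSq (ψ σ) else 0) :=
    Finset.sum_nonneg fun σ _ => by split_ifs; exacts [Complex.normSq_nonneg _, le_refl 0]
  have h2' : (0:ℝ) < 1 + (lamv k)^2 := by positivity
  have hs2 : (0:ℝ) ≤ ∑ σ : Cfg Λ, (if σ x = false ∧ σ y = true then
      Complex.normSq (ψ σ - (lamv k:ℂ) * ψ (swapxy x y σ)) / (1 + (lamv k)^2) else 0) :=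
    Finset.sum_nonneg fun σ _ => by
      split_ifs
      exacts [div_nonneg (Complex.normSq_nonneg _) (le_of_lt h2'), le_refl 0]
  have hz1 : ∑ σ : Cfg Λ, (if σ x = true ∧ σ y = true then Complex.normSq (ψ σ) else 0) = 0 := by
    linarith
  have := (Finset.sum_eq_zero_iff_of_nonneg (fun σ _ => by
      split_ifs; exacts [Complex.normSq_nonneg _, le_refl 0])).1 hz1 σ (Finset.mem_univ σ)
  rw [if_pos ⟨h1, h2⟩] at this
  exact Complex.normSq_eq_zero.1 this

lemma ker_hop_rel (lamv : Fin d → ℝ) (ψ : HSp Λ)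
    (hψ : Ham Λ lamv ψ = 0) (k : Fin d) (x : ↑Λ) (hy : ((x : Site d) + unitVec d k) ∈ Λ)
    (σ : Cfg Λ) (h1 : σ x = false) (h2 : σ ⟨(x : Site d) + unitVec d k, hy⟩ = true) :
    ψ σ = (lamv k : ℂ) * ψ (swapxy x ⟨(x : Site d) + unitVec d k, hy⟩ σ) := by
  set y : ↑Λ := ⟨(x : Site d) + unitVec d k, hy⟩
  have hb := ker_facts lamv ψ hψ k x hy
  unfold bondE at hb
  have hs1 : (0:ℝ) ≤ ∑ σ : Cfg Λ, (if σ x = true ∧ σ y = true then Complex.normSq (ψ σ) else 0) :=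
    Finset.sum_nonneg fun σ _ => by split_ifs; exacts [Complex.normSq_nonneg _, le_refl 0]
  have h2' : (0:ℝ) < 1 + (lamv k)^2 := by positivity
  have hnn : ∀ σ : Cfg Λ, (0:ℝ) ≤ (if σ x = false ∧ σ y = true then
      Complex.normSq (ψ σ - (lamv k:ℂ) * ψ (swapxy x y σ)) / (1 + (lamv k)^2) else 0) := fun σ => by
    split_ifs
    exacts [div_nonneg (Complex.normSq_nonneg _) (le_of_lt h2'), le_refl 0]
  have hs2 : (0:ℝ) ≤ ∑ σ : Cfg Λ, (if σ x = false ∧ σ y = true then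
      Complex.normSq (ψ σ - (lamv k:ℂ) * ψ (swapxy x y σ)) / (1 + (lamv k)^2) else 0) :=
    Finset.sum_nonneg fun σ _ => hnn σ
  have hz2 : ∑ σ : Cfg Λ, (if σ x = false ∧ σ y = true then
      Complex.normSq (ψ σ - (lamv k:ℂ) * ψ (swapxy x y σ)) / (1 + (lamv k)^2) else 0) = 0 := by
    linarith
  have := (Finset.sum_eq_zero_iff_of_nonneg (fun σ _ => hnn σ)).1 hz2 σ (Finset.mem_univ σ)
  rw [if_pos ⟨h1, h2⟩] at this
  field_simp at this
  rw [mul_zero, Complex.normSq_eq_zero] at this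
  exact sub_eq_zero.1 this

lemma site_ne (x : Site d) (k : Fin d) : x ≠ x + unitVec d k := by
  intro hc
  have := congrFun hc k
  simp [unitVec] at this

lemma lamPow_pos (lamv : Fin d → ℝ) (hlam : ∀ k, 0 < lamv k) (x : Site d) :
    0 < lamPow lamv x :=
  Finset.prod_pos fun k _ => zpow_pos (hlam k) _

lemma lamPow_step (lamv : Fin d → ℝ) (hlam : ∀ k, 0 < lamv k) (x : Site d) (k : Fin d) :
    lamPow lamv (x + unitVec d k) = lamPow lamv x * lamv k := by
  unfold lamPow
  have key : ∀ j : Fin d, lamv j ^ ((x + unitVec d k) j)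
      = lamv j ^ (x j) * (if j = k then lamv j else 1) := by
    intro j
    have hne : lamv j ≠ 0 := ne_of_gt (hlam j)
    show lamv j ^ (x j + (if j = k then (1:ℤ) else 0)) = _
    rw [zpow_add₀ hne]
    congr 1
    split_ifs <;> simp
  rw [Finset.prod_congr rfl (fun j _ => key j), Finset.prod_mul_distrib]
  congr 1
  simp

lemma swap_comm (x y : ↑Λ) (h : x ≠ y) (σ : Cfg Λ) : swapxy x y σ = swapxy y x σ := by
  funext z
  by_cases hz : z = y
  · rw [hz, swap_apply_y, swap_apply_x y x σ (Ne.symm h)]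
  · by_cases hz' : z = x
    · rw [hz', swap_apply_x x y σ h, swap_apply_y]
    · rw [swap_apply_other _ _ _ _ hz' hz, swap_apply_other _ _ _ _ hz hz']

lemma swap_dlt (x y : ↑Λ) (h : x ≠ y) : swapxy x y (dlt y) = dlt x := by
  funext z
  by_cases hz : z = y
  · rw [hz, swap_apply_y, dlt_ne y x h, dlt_ne x y (Ne.symm h)]
  · by_cases hz' : z = x
    · rw [hz', swap_apply_x x y _ h, dlt_self, dlt_self]
    · rw [swap_apply_other _ _ _ _ hz' hz, dlt_ne y z hz, dlt_ne x z hz']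

/-- a relation version with a general second endpoint -/
lemma hop_rel' (lamv : Fin d → ℝ) (ψ : HSp Λ) (hψ : Ham Λ lamv ψ = 0) (k : Fin d)
    (x y : ↑Λ) (hxy : (y : Site d) = (x : Site d) + unitVec d k)
    (σ : Cfg Λ) (h1 : σ x = false) (h2 : σ y = true) :
    ψ σ = (lamv k : ℂ) * ψ (swapxy x y σ) := by
  obtain ⟨yv, hyv⟩ := y
  simp only [Subtype.coe_mk] at hxy
  subst hxy
  exact ker_hop_rel lamv ψ hψ k x hyv σ h1 h2

lemma zero_pair' (lamv : Fin d → ℝ) (ψ : HSp Λ) (hψ : Ham Λ lamv ψ = 0) (k : Fin d)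
    (x y : ↑Λ) (hxy : (y : Site d) = (x : Site d) + unitVec d k)
    (σ : Cfg Λ) (h1 : σ x = true) (h2 : σ y = true) : ψ σ = 0 := by
  obtain ⟨yv, hyv⟩ := y
  simp only [Subtype.coe_mk] at hxy
  subst hxy
  exact ker_zero_pair lamv ψ hψ k x hyv σ h1 h2

lemma bond_ne' (x y : ↑Λ) (k : Fin d) (hxy : (y : Site d) = (x : Site d) + unitVec d k) :
    x ≠ y := by
  intro hc
  exact site_ne (x : Site d) k (by rw [← hxy, ← hc])

/-- trichotomy of configurations -/
lemma cfg_cases (σ : Cfg Λ) :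
    σ = (fun _ => false) ∨ (∃ z : ↑Λ, σ = dlt z) ∨
      (∃ u v : ↑Λ, u ≠ v ∧ σ u = true ∧ σ v = true) := by
  by_cases h1 : ∃ u, σ u = true
  · obtain ⟨u, hu⟩ := h1
    by_cases h2 : ∃ v, v ≠ u ∧ σ v = true
    · obtain ⟨v, hv1, hv2⟩ := h2
      exact Or.inr (Or.inr ⟨u, v, Ne.symm hv1, hu, hv2⟩)
    · push_neg at h2
      refine Or.inr (Or.inl ⟨u, funext fun z => ?_⟩)
      by_cases hz : z = u
      · subst hz; rw [hu, dlt_self]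
      · rw [dlt_ne u z hz]
        rcases hσz : σ z with _ | _
        · rfl
        · exact absurd hσz (h2 z hz)
  · push_neg at h1
    refine Or.inl (funext fun z => ?_)
    rcases hσz : σ z with _ | _
    · rfl
    · exact absurd hσz (h1 z)

/-- a configuration with at least two particles is in the kernel only with value 0 -/
lemma multi_zero (hconn : ConnectedIn Λ) (lamv : Fin d → ℝ) (hlam : ∀ k, 0 < lamv k)
    (ψ : HSp Λ) (hψ : Ham Λ lamv ψ = 0) (u v : ↑Λ) (huv : u ≠ v)
    (σ : Cfg Λ) (hu : σ u = true) (hv : σ v = true) : ψ σ = 0 := by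
  have hrel : Relation.ReflTransGen (fun p q => q ∈ Λ ∧ Adj p q) (u : Site d) (v : Site d) :=
    hconn u u.2 v v.2
  have main : ∀ (a : Site d),
      Relation.ReflTransGen (fun p q => q ∈ Λ ∧ Adj p q) a (v : Site d) →
      ∀ (ha : a ∈ Λ) (σ : Cfg Λ), σ ⟨a, ha⟩ = true → σ v = true →
        (⟨a, ha⟩ : ↑Λ) ≠ v → ψ σ = 0 := by
    intro a hrel
    induction hrel using Relation.ReflTransGen.head_induction_on with
    | refl =>
      intro ha σ h1 h2 hne
      exact absurd (Subtype.ext rfl) hne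
    | head hac hcb ih =>
      rename_i a c
      intro ha σ h1 h2 hne
      obtain ⟨hcΛ, k, hk⟩ := hac
      set A : ↑Λ := ⟨a, ha⟩ with hA
      set C : ↑Λ := ⟨c, hcΛ⟩ with hC
      rcases hσC : σ C with _ | _
      · -- target site empty: move the particle
        have hAC : A ≠ C := by
          intro hcontra
          rw [hcontra, hσC] at h1
          exact Bool.false_ne_true h1
        have hvA : v ≠ A := Ne.symm hne
        have hvC : v ≠ C := by
          intro hcontra
          rw [← hcontra, h2] at hσC
          simp at hσC
        set σ' : Cfg Λ := swapxy A C σ with hσ'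
        have h1' : σ' C = true := by rw [hσ', swap_apply_y]; exact h1
        have h2' : σ' v = true := by
          rw [hσ', swap_apply_other _ _ _ _ hvA hvC]; exact h2
        have hCv : C ≠ v := Ne.symm hvC
        have hψσ' : ψ σ' = 0 := by
          have := ih hcΛ σ' h1' h2' (by exact hCv)
          exact this
        have hlk : ((lamv k : ℝ) : ℂ) ≠ 0 := by
          exact_mod_cast ne_of_gt (hlam k)
        rcases hk with hk1 | hk2
        · -- c = a + e_k : bond (A, C); σ is (true, false) there
          have hCA : (C : Site d) = (A : Site d) + unitVec d k := hk1
          have hr := hop_rel' lamv ψ hψ k A C hCA σ'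
            (by rw [hσ', swap_apply_x A C σ hAC]; exact hσC) h1'
          rw [hσ', swap_invol A C hAC σ] at hr
          rw [← hσ'] at hr
          rw [hψσ'] at hr
          have := hr.symm
          rcases mul_eq_zero.1 this with h | h
          · exact absurd h hlk
          · exact h
        · -- a = c + e_k : bond (C, A); σ is (false, true) there
          have hAc : (A : Site d) = (C : Site d) + unitVec d k := hk2
          have hr := hop_rel' lamv ψ hψ k C A hAc σ hσC h1
          rw [swap_comm C A (Ne.symm hAC) σ, ← hσ', hψσ', mul_zero] at hr
          exact hr
      · -- both occupied and adjacent: value 0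
        rcases hk with hk1 | hk2
        · exact zero_pair' lamv ψ hψ k A C hk1 σ h1 hσC
        · exact zero_pair' lamv ψ hψ k C A hk2 σ hσC h1
  have huv' : (⟨(u : Site d), u.2⟩ : ↑Λ) ≠ v := by
    simpa using huv
  exact main (u : Site d) hrel u.2 σ (by simpa using hu) hv huv'

lemma dlt_inj {z w : ↑Λ} (h : dlt z = dlt w) : z = w := by
  by_contra hc
  have := congrFun h z
  rw [dlt_self, dlt_ne w z hc] at this
  simp at this

def ksum (lamv : Fin d → ℝ) : HSp Λ :=
  WithLp.toLp 2 (fun σ => ∑ z : ↑Λ, ((lamPow lamv (z : Site d) : ℝ) : ℂ) * ksi z σ)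

lemma ksi_apply (x : ↑Λ) (σ : Cfg Λ) : ksi x σ = if σ = dlt x then 1 else 0 := rfl

lemma ksum_dlt (lamv : Fin d → ℝ) (z : ↑Λ) :
    ksum lamv (dlt z) = ((lamPow lamv (z : Site d) : ℝ) : ℂ) := by
  show (∑ w : ↑Λ, ((lamPow lamv (w : Site d) : ℝ) : ℂ) * ksi w (dlt z)) = _
  rw [Finset.sum_eq_single z]
  · rw [ksi_apply, if_pos rfl, mul_one]
  · intro w _ hw
    rw [ksi_apply, if_neg (fun hc => hw (dlt_inj hc).symm), mul_zero]
  · intro hz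
    exact absurd (Finset.mem_univ z) hz

lemma ksum_zero (lamv : Fin d → ℝ) (σ : Cfg Λ) (h : ∀ z : ↑Λ, σ ≠ dlt z) :
    ksum lamv σ = 0 := by
  show (∑ w : ↑Λ, ((lamPow lamv (w : Site d) : ℝ) : ℂ) * ksi w σ) = 0
  refine Finset.sum_eq_zero fun w _ => ?_
  rw [ksi_apply, if_neg (h w), mul_zero]

lemma one_forces {σ : Cfg Λ} {z w : ↑Λ} (h : σ = dlt z) (hw : σ w = true) : z = w := by
  by_contra hc
  rw [h, dlt_ne z w (fun hcc => hc hcc.symm)] at hw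
  simp at hw

lemma hop_ksum (lamv : Fin d → ℝ) (hlam : ∀ k, 0 < lamv k) (k : Fin d) (x y : ↑Λ)
    (hxy : (y : Site d) = (x : Site d) + unitVec d k) (σ : Cfg Λ) :
    hop (lamv k) x y (ksum lamv) σ = 0 := by
  have hne := bond_ne' x y k hxy
  have hstep : lamPow lamv (y : Site d) = lamPow lamv (x : Site d) * lamv k := by
    rw [hxy, lamPow_step lamv hlam]
  rw [hop_eq _ x y hne]
  rcases hx : σ x with _ | _ <;> rcases hy : σ y with _ | _
  · simp [hx, hy]
  · -- (false, true)
    simp only [hx, hy]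
    norm_num
    by_cases hσ : σ = dlt y
    · rw [hσ, ksum_dlt, swap_dlt x y hne, ksum_dlt, hstep]
      push_cast
      ring_nf
      simp
    · have hz1 : ∀ z : ↑Λ, σ ≠ dlt z := by
        intro z hc
        exact hσ (by rw [hc, one_forces hc hy])
      have hz2 : ∀ z : ↑Λ, swapxy x y σ ≠ dlt z := by
        intro z hc
        have hswx : swapxy x y σ x = true := by rw [swap_apply_x x y σ hne, hy]
        have hzx : z = x := one_forces hc hswx
        rw [hzx] at hc
        apply hσ
        have : σ = swapxy x y (dlt x) := by rw [← hc, swap_invol x y hne]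
        rw [this, swap_comm x y hne, swap_dlt y x (Ne.symm hne)]
      rw [ksum_zero lamv σ hz1, ksum_zero lamv _ hz2]
      simp
  · -- (true, false)
    simp only [hx, hy]
    norm_num
    by_cases hσ : σ = dlt x
    · rw [hσ, ksum_dlt, swap_comm x y hne, swap_dlt y x (Ne.symm hne), ksum_dlt, hstep]
      push_cast
      ring_nf
      simp
    · have hz1 : ∀ z : ↑Λ, σ ≠ dlt z := by
        intro z hc
        exact hσ (by rw [hc, one_forces hc hx])
      have hz2 : ∀ z : ↑Λ, swapxy x y σ ≠ dlt z := by
        intro z hc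
        have hswy : swapxy x y σ y = true := by rw [swap_apply_y, hx]
        have hzy : z = y := one_forces hc hswy
        rw [hzy] at hc
        apply hσ
        have : σ = swapxy x y (dlt y) := by rw [← hc, swap_invol x y hne]
        rw [this, swap_dlt x y hne]
      rw [ksum_zero lamv σ hz1, ksum_zero lamv _ hz2]
      simp
  · -- (true, true)
    simp only [hx, hy]
    norm_num
    refine ksum_zero lamv σ (fun z hc => ?_)
    have h1 : z = x := one_forces hc hx
    have h2 : z = y := one_forces hc hy
    exact hne (h1 ▸ h2)

lemma vac_apply_true {σ : Cfg Λ} {u : ↑Λ} (hu : σ u = true) : vac Λ σ = 0 := by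
  unfold vac
  simp only [WithLp.ofLp_toLp]
  rw [if_neg]
  intro hc
  rw [hc] at hu
  simp at hu

lemma hop_vac (lam : ℝ) (x y : ↑Λ) (h : x ≠ y) (σ : Cfg Λ) : hop lam x y (vac Λ) σ = 0 := by
  rw [hop_eq lam x y h]
  rcases hx : σ x with _ | _ <;> rcases hy : σ y with _ | _
  · simp [hx, hy]
  · simp only [hx, hy]
    norm_num
    have h1 : vac Λ σ = 0 := vac_apply_true hy
    have h2 : vac Λ (swapxy x y σ) = 0 :=
      vac_apply_true (u := x) (by rw [swap_apply_x x y σ h, hy])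
    rw [h1, h2]
    simp
  · simp only [hx, hy]
    norm_num
    have h1 : vac Λ σ = 0 := vac_apply_true hx
    have h2 : vac Λ (swapxy x y σ) = 0 :=
      vac_apply_true (u := y) (by rw [swap_apply_y, hx])
    rw [h1, h2]
    simp
  · simp only [hx, hy]
    norm_num
    exact vac_apply_true hx

lemma Ham_zero_of_hop (ψ : HSp Λ) (lamv : Fin d → ℝ)
    (h : ∀ (k : Fin d) (x y : ↑Λ), (y : Site d) = (x : Site d) + unitVec d k →
      ∀ σ, hop (lamv k) x y ψ σ = 0) : Ham Λ lamv ψ = 0 := by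
  refine PiLp.ext fun σ => ?_
  show (∑ k : Fin d, ∑ x : ↑Λ, _) = (0 : ℂ)
  refine Finset.sum_eq_zero fun k _ => Finset.sum_eq_zero fun x _ => ?_
  by_cases h' : ((x : Site d) + unitVec d k) ∈ Λ
  · simp only [h', dif_pos]
    exact h k x ⟨_, h'⟩ rfl σ
  · simp [h']

lemma Ham_vac (lamv : Fin d → ℝ) : Ham Λ lamv (vac Λ) = 0 :=
  Ham_zero_of_hop _ _ fun k x y hxy σ => hop_vac (lamv k) x y (bond_ne' x y k hxy) σ

lemma Ham_ksum (lamv : Fin d → ℝ) (hlam : ∀ k, 0 < lamv k) :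
    Ham Λ lamv (ksum lamv) = 0 :=
  Ham_zero_of_hop _ _ fun k x y hxy σ => hop_ksum lamv hlam k x y hxy σ

lemma hop_lin (lam : ℝ) (x y : ↑Λ) (h : x ≠ y) (ψ ψ1 ψ2 : HSp Λ) (a b : ℂ)
    (hp : ∀ τ, ψ τ = a * ψ1 τ + b * ψ2 τ) (σ : Cfg Λ) :
    hop lam x y ψ σ = a * hop lam x y ψ1 σ + b * hop lam x y ψ2 σ := by
  rw [hop_eq lam x y h, hop_eq lam x y h, hop_eq lam x y h]
  simp only [hp]
  split_ifs <;> ring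

lemma Ham_lin (lamv : Fin d → ℝ) (ψ ψ1 ψ2 : HSp Λ) (a b : ℂ)
    (hp : ∀ τ, ψ τ = a * ψ1 τ + b * ψ2 τ) (σ : Cfg Λ) :
    Ham Λ lamv ψ σ = a * Ham Λ lamv ψ1 σ + b * Ham Λ lamv ψ2 σ := by
  unfold Ham
  simp only [WithLp.ofLp_toLp]
  rw [Finset.mul_sum, Finset.mul_sum, ← Finset.sum_add_distrib]
  refine Finset.sum_congr rfl fun k _ => ?_
  rw [Finset.mul_sum, Finset.mul_sum, ← Finset.sum_add_distrib]
  refine Finset.sum_congr rfl fun x _ => ?_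
  by_cases h' : ((x : Site d) + unitVec d k) ∈ Λ
  · simp only [h', dif_pos]
    exact hop_lin (lamv k) x _ (bond_ne x k h') ψ ψ1 ψ2 a b hp σ
  · simp [h']

lemma dlt_step (lamv : Fin d → ℝ) (ψ : HSp Λ) (hψ : Ham Λ lamv ψ = 0) (k : Fin d)
    (x y : ↑Λ) (hxy : (y : Site d) = (x : Site d) + unitVec d k) :
    ψ (dlt y) = (lamv k : ℂ) * ψ (dlt x) := by
  have hne := bond_ne' x y k hxy
  have := hop_rel' lamv ψ hψ k x y hxy (dlt y) (dlt_ne y x hne) (dlt_self y)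
  rw [swap_dlt x y hne] at this
  exact this

lemma dlt_ratio (hconn : ConnectedIn Λ) (lamv : Fin d → ℝ) (hlam : ∀ k, 0 < lamv k)
    (ψ : HSp Λ) (hψ : Ham Λ lamv ψ = 0) (u v : ↑Λ) :
    ((lamPow lamv (u : Site d) : ℝ) : ℂ) * ψ (dlt v)
      = ((lamPow lamv (v : Site d) : ℝ) : ℂ) * ψ (dlt u) := by
  have hrel : Relation.ReflTransGen (fun p q => q ∈ Λ ∧ Adj p q) (u : Site d) (v : Site d) :=
    hconn u u.2 v v.2
  have main : ∀ (a : Site d),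
      Relation.ReflTransGen (fun p q => q ∈ Λ ∧ Adj p q) a (v : Site d) →
      ∀ (ha : a ∈ Λ),
        ((lamPow lamv a : ℝ) : ℂ) * ψ (dlt v)
          = ((lamPow lamv (v : Site d) : ℝ) : ℂ) * ψ (dlt ⟨a, ha⟩) := by
    intro a hrel
    induction hrel using Relation.ReflTransGen.head_induction_on with
    | refl =>
      intro ha
      have : (⟨(v : Site d), ha⟩ : ↑Λ) = v := Subtype.ext rfl
      rw [this]
    | head hac hcb ih =>
      rename_i a c
      intro ha
      obtain ⟨hcΛ, k, hk⟩ := hac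
      set A : ↑Λ := ⟨a, ha⟩ with hA
      set C : ↑Λ := ⟨c, hcΛ⟩ with hC
      have ihc := ih hcΛ
      have hlk : ((lamv k : ℝ) : ℂ) ≠ 0 := by exact_mod_cast ne_of_gt (hlam k)
      rcases hk with hk1 | hk2
      · -- c = a + e_k
        have hs : ψ (dlt C) = (lamv k : ℂ) * ψ (dlt A) :=
          dlt_step lamv ψ hψ k A C hk1
        have hlp : lamPow lamv c = lamPow lamv a * lamv k := by
          rw [hk1]; exact lamPow_step lamv hlam a k
        rw [hlp, hs] at ihc
        push_cast at ihc ⊢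
        apply mul_left_cancel₀ hlk
        linear_combination ihc
      · -- a = c + e_k
        have hs : ψ (dlt A) = (lamv k : ℂ) * ψ (dlt C) :=
          dlt_step lamv ψ hψ k C A hk2
        have hlp : lamPow lamv a = lamPow lamv c * lamv k := by
          rw [hk2]; exact lamPow_step lamv hlam c k
        rw [hlp, hs]
        push_cast at ihc ⊢
        linear_combination ((lamv k : ℝ) : ℂ) * ihc
  have := main (u : Site d) hrel u.2
  have heq : (⟨(u : Site d), u.2⟩ : ↑Λ) = u := Subtype.ext rfl
  rw [heq] at this
  exact this

lemma vac_vac : vac Λ (fun _ => false) = 1 := by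
  unfold vac
  simp only [WithLp.ofLp_toLp]
  rw [if_pos trivial]

lemma psi1_apply (lamv : Fin d → ℝ) (σ : Cfg Λ) :
    psi1 Λ lamv σ = ((Real.sqrt (CC lamv Λ) : ℝ) : ℂ)⁻¹ * ksum lamv σ := rfl

lemma const_false_ne_dlt (z : ↑Λ) : (fun _ : ↑Λ => false) ≠ dlt z := by
  intro hc
  have := congrFun hc z
  rw [dlt_self] at this
  simp at this

theorem pvbs_main {d : ℕ} (Λ : Finset (Site d)) (hne : Λ.Nonempty)
    (hconn : ConnectedIn Λ) (lam : Fin d → ℝ) (hlam : ∀ k, 0 < lam k) :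
    (∀ ψ : HSp Λ, Ham Λ lam ψ = 0 ↔ ψ ∈ Submodule.span ℂ {vac Λ, psi1 Λ lam}) ∧
    LinearIndependent ℂ ![vac Λ, psi1 Λ lam] := by
  classical
  obtain ⟨x0, -⟩ : ∃ _ : ↑Λ, True := ⟨⟨hne.choose, hne.choose_spec⟩, trivial⟩
  have hCC : 0 < CC lam Λ :=
    Finset.sum_pos (fun x _ => pow_pos (lamPow_pos lam hlam x) 2) hne
  have hsq : Real.sqrt (CC lam Λ) ≠ 0 := ne_of_gt (Real.sqrt_pos.2 hCC)
  have hc0 : ((Real.sqrt (CC lam Λ) : ℝ) : ℂ) ≠ 0 := Complex.ofReal_ne_zero.2 hsq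
  have hL0 : ((lamPow lam (x0 : Site d) : ℝ) : ℂ) ≠ 0 :=
    Complex.ofReal_ne_zero.2 (ne_of_gt (lamPow_pos lam hlam _))
  have hpsi1_dlt : ∀ z : ↑Λ, psi1 Λ lam (dlt z)
      = ((Real.sqrt (CC lam Λ) : ℝ) : ℂ)⁻¹ * ((lamPow lam (z : Site d) : ℝ) : ℂ) := by
    intro z
    rw [psi1_apply, ksum_dlt]
  have hpsi1_vac : psi1 Λ lam (fun _ => false) = 0 := by
    rw [psi1_apply, ksum_zero lam _ (fun z => const_false_ne_dlt z), mul_zero]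
  have hpsi1_multi : ∀ (σ : Cfg Λ) (u v : ↑Λ), u ≠ v → σ u = true → σ v = true →
      psi1 Λ lam σ = 0 := by
    intro σ u v huv hu hv
    rw [psi1_apply, ksum_zero lam σ (fun z hc => huv ((one_forces hc hu).symm.trans
      (one_forces hc hv))), mul_zero]
  have Ham_psi1 : Ham Λ lam (psi1 Λ lam) = 0 := by
    refine PiLp.ext fun σ => ?_
    have hp : ∀ τ, psi1 Λ lam τ = ((Real.sqrt (CC lam Λ) : ℝ) : ℂ)⁻¹ * ksum lam τ
        + 0 * ksum lam τ := by
      intro τ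
      rw [psi1_apply, zero_mul, add_zero]
    have := Ham_lin lam (psi1 Λ lam) (ksum lam) (ksum lam) _ 0 hp σ
    rw [Ham_ksum lam hlam] at this
    show Ham Λ lam (psi1 Λ lam) σ = 0
    rw [this]
    show _ * (0 : HSp Λ) σ + 0 * (0 : HSp Λ) σ = 0
    show _ * (0 : ℂ) + 0 * (0 : ℂ) = 0
    ring
  constructor
  · intro ψ
    constructor
    · -- kernel ⊆ span
      intro hψ
      set aa : ℂ := ψ (fun _ => false) with haa
      set bb : ℂ := (ψ (dlt x0) / ((lamPow lam (x0 : Site d) : ℝ) : ℂ))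
        * ((Real.sqrt (CC lam Λ) : ℝ) : ℂ) with hbb
      refine Submodule.mem_span_pair.mpr ⟨aa, bb, ?_⟩
      refine PiLp.ext fun σ => ?_
      have hlhs : (aa • vac Λ + bb • psi1 Λ lam) σ = aa * vac Λ σ + bb * psi1 Λ lam σ := rfl
      rw [hlhs]
      rcases cfg_cases σ with hσ | ⟨z, hσ⟩ | ⟨u, v, huv, hu, hv⟩
      · rw [hσ, vac_vac, hpsi1_vac, mul_one, mul_zero, add_zero]
      · have hσz : σ z = true := by rw [hσ]; exact dlt_self z
        rw [vac_apply_true hσz, mul_zero, zero_add, hσ, hpsi1_dlt z]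
        have hratio := dlt_ratio hconn lam hlam ψ hψ x0 z
        rw [hbb]
        field_simp
        linear_combination (-1 : ℂ) * hratio
      · rw [vac_apply_true hu, hpsi1_multi σ u v huv hu hv, mul_zero, mul_zero, add_zero,
          multi_zero hconn lam hlam ψ hψ u v huv σ hu hv]
    · -- span ⊆ kernel
      intro hmem
      obtain ⟨s, t, hst⟩ := Submodule.mem_span_pair.mp hmem
      have hp : ∀ τ, ψ τ = s * vac Λ τ + t * psi1 Λ lam τ := by
        intro τ
        have : (s • vac Λ + t • psi1 Λ lam) τ = ψ τ := by rw [hst]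
        rw [← this]
        rfl
      refine PiLp.ext fun σ => ?_
      have := Ham_lin lam ψ (vac Λ) (psi1 Λ lam) s t hp σ
      rw [Ham_vac lam, Ham_psi1] at this
      show Ham Λ lam ψ σ = 0
      rw [this]
      show s * (0 : ℂ) + t * (0 : ℂ) = 0
      ring
  · -- linear independence
    refine LinearIndependent.pair_iff.mpr fun s t hst => ?_
    have hpt : ∀ σ, s * vac Λ σ + t * psi1 Λ lam σ = 0 := by
      intro σ
      exact congrArg (fun φ : HSp Λ => φ σ) hst
    have h1 := hpt (fun _ => false)
    rw [vac_vac, hpsi1_vac, mul_one, mul_zero, add_zero] at h1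
    subst h1
    have h2 := hpt (dlt x0)
    rw [vac_apply_true (dlt_self x0), hpsi1_dlt x0, mul_zero, zero_add] at h2
    rcases mul_eq_zero.1 h2 with h | h
    · exact ⟨rfl, h⟩
    · rcases mul_eq_zero.1 h with h' | h'
      · exact absurd h' (inv_ne_zero hc0)
      · exact absurd h' hL0

end PVBSaux

/-- on a finite connected `Λ ⊆ ℤ^d` with all `λ_k > 0`, the kernel of the
PVBS Hamiltonian is exactly the span of the vacuum `ψ₀` and the one-particle vector `ψ₁`,
and these two vectors are linearly independent (so the kernel is two-dimensional). -/
theorem pvbs_finite_ground_state_space {d : ℕ} (Λ : Finset (Site d)) (hne : Λ.Nonempty)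
    (hconn : ConnectedIn Λ) (lam : Fin d → ℝ) (hlam : ∀ k, 0 < lam k) :
    (∀ ψ : HSp Λ, Ham Λ lam ψ = 0 ↔ ψ ∈ Submodule.span ℂ {vac Λ, psi1 Λ lam}) ∧
    LinearIndependent ℂ ![vac Λ, psi1 Λ lam] :=
  PVBSaux.pvbs_main Λ hne hconn lam hlam

end
end

section
/- Fix λ > 0 with λ ≠ 1 and define c(λ, n) = Σ_{i=0}^n λ^{2i}. Then for every n ≥ 1, λ² c(λ, n-1) / ((1+λ²) c(λ, n)) ≤ ε(λ)² < 1/2, where ε(λ) = λ/√(1+λ²) if λ < 1 and ε(λ) = 1/√(1+λ²) if λ > 1. -/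
noncomputable section

/-- `c(λ, n) = ∑_{i=0}^n λ^{2i}`. -/
def cgeom (lam : ℝ) (n : ℕ) : ℝ := ∑ i ∈ Finset.range (n + 1), lam ^ (2 * i)

/-- `ε(λ) = λ/√(1+λ²)` if `λ < 1`, and `1/√(1+λ²)` if `λ > 1`. -/
def eps (lam : ℝ) : ℝ :=
  if lam < 1 then lam / Real.sqrt (1 + lam ^ 2) else 1 / Real.sqrt (1 + lam ^ 2)

lemma cgeom_pos (lam : ℝ) (hpos : 0 < lam) (m : ℕ) : 0 < cgeom lam m :=
  Finset.sum_pos (fun i _ => pow_pos hpos _) ⟨0, Finset.mem_range.2 (Nat.succ_pos _)⟩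

lemma cgeom_rec' (lam : ℝ) (m : ℕ) :
    cgeom lam (m + 1) = 1 + lam ^ 2 * cgeom lam m := by
  simp only [cgeom]
  rw [Finset.sum_range_succ' (fun i => lam ^ (2 * i)) (m + 1), Finset.mul_sum]
  simp only [Nat.mul_succ, pow_add, mul_zero, pow_zero]
  rw [add_comm]
  congr 1
  exact Finset.sum_congr rfl (fun i _ => mul_comm _ _)

lemma cgeom_rec (lam : ℝ) (n : ℕ) (hn : 1 ≤ n) :
    cgeom lam n = 1 + lam ^ 2 * cgeom lam (n - 1) := by
  conv_lhs => rw [show n = (n - 1) + 1 by omega]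
  exact cgeom_rec' lam (n - 1)

lemma cgeom_mono (lam : ℝ) (hpos : 0 < lam) (n : ℕ) :
    cgeom lam (n - 1) ≤ cgeom lam n :=
  Finset.sum_le_sum_of_subset_of_nonneg
    (Finset.range_subset_range.2 (by omega)) (fun i _ _ => by positivity)

/-- for `λ > 0`, `λ ≠ 1` and all `n ≥ 1`,
`λ² c(λ,n-1) / ((1+λ²) c(λ,n)) ≤ ε(λ)² < 1/2`. -/
theorem martingale_key_estimate (lam : ℝ) (hpos : 0 < lam) (hne : lam ≠ 1)
    (n : ℕ) (hn : 1 ≤ n) :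
    lam ^ 2 * cgeom lam (n - 1) / ((1 + lam ^ 2) * cgeom lam n) ≤ (eps lam) ^ 2 ∧
    (eps lam) ^ 2 < 1 / 2 := by
  have h1 : (0:ℝ) < 1 + lam ^ 2 := by positivity
  have hsq : Real.sqrt (1 + lam ^ 2) ^ 2 = 1 + lam ^ 2 := Real.sq_sqrt h1.le
  have hcn := cgeom_pos lam hpos n
  have hcn1 := cgeom_pos lam hpos (n - 1)
  have hrec := cgeom_rec lam n hn
  rcases lt_or_gt_of_ne hne with hlt | hgt
  · have heps : (eps lam) ^ 2 = lam ^ 2 / (1 + lam ^ 2) := by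
      rw [eps, if_pos hlt, div_pow, hsq]
    refine ⟨?_, ?_⟩
    · rw [heps, div_le_div_iff₀ (by positivity) h1]
      have hmono := cgeom_mono lam hpos n
      nlinarith [mul_le_mul_of_nonneg_left hmono
        (show (0:ℝ) ≤ lam ^ 2 * (1 + lam ^ 2) by positivity)]
    · rw [heps, div_lt_div_iff₀ h1 (by norm_num)]
      nlinarith
  · have heps : (eps lam) ^ 2 = 1 / (1 + lam ^ 2) := by
      rw [eps, if_neg (not_lt.2 hgt.le), div_pow, hsq, one_pow]
    refine ⟨?_, ?_⟩
    · rw [heps, div_le_div_iff₀ (by positivity) h1]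
      nlinarith
    · rw [heps, div_lt_div_iff₀ h1 (by norm_num)]
      nlinarith
end
end
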